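/- Let n ≥ 1, T > 0, λ ∈ ℝ, 1 < p < ∞, and let A : [0,T) → ℝ be continuously differentiable with A(t) > 0 for all t ∈ [0,T). Let Y : [0,T) → ℝⁿ be a twice continuously differentiable solution of D_t²Y(t) + A(t)Y(t) + λ|Y(t)|^{p−1}Y(t) = 0 on [0,T). Define e⁰(t) := (1/2)A(t)^{−1}|D_tY(t)|² + (1/2)|Y(t)|² + (λ/(p+1))A(t)^{−1}|Y(t)|^{p+1} and e¹(t) := (1/2)A(t)^{−2}(D_tA)(t)|D_tY(t)|² + (λ/(p+1))A(t)^{−2}(D_tA)(t)|Y(t)|^{p+1}. Then the energy identity e⁰(t) + ∫₀ᵗ e¹(s) ds = e⁰(0) holds for all t ∈ [0,T). -/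

import Mathlib

open Set intervalIntegral

/-- Energy identity for `D_t²Y + A(t)Y + λ|Y|^{p-1}Y = 0` with `A > 0`, where
`e⁰ = (1/2)A⁻¹|D_tY|² + (1/2)|Y|² + (λ/(p+1))A⁻¹|Y|^{p+1}` and
`e¹ = (1/2)A⁻²(D_tA)|D_tY|² + (λ/(p+1))A⁻²(D_tA)|Y|^{p+1}`:
`e⁰(t) + ∫₀ᵗ e¹(s) ds = e⁰(0)`. -/
theorem stmt_17 (n : ℕ) (hn : 1 ≤ n) (T lam p : ℝ) (hT : 0 < T) (hp : 1 < p)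
    (A A' : ℝ → ℝ)
    (hA : ∀ t ∈ Ico (0 : ℝ) T, HasDerivWithinAt A (A' t) (Ico (0 : ℝ) T) t)
    (hAc : ContinuousOn A' (Ico (0 : ℝ) T))
    (hApos : ∀ t ∈ Ico (0 : ℝ) T, 0 < A t)
    (Y Y' : ℝ → EuclideanSpace ℝ (Fin n))
    (hY1 : ∀ t ∈ Ico (0 : ℝ) T, HasDerivWithinAt Y (Y' t) (Ico (0 : ℝ) T) t)
    (hY2 : ∀ t ∈ Ico (0 : ℝ) T, HasDerivWithinAt Y'
      (-(A t • Y t) - (lam * ‖Y t‖ ^ (p - 1)) • Y t) (Ico (0 : ℝ) T) t) :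
    ∀ t ∈ Ico (0 : ℝ) T,
      ((1 / 2) * (A t)⁻¹ * ‖Y' t‖ ^ 2 + (1 / 2) * ‖Y t‖ ^ 2 +
          (lam / (p + 1)) * (A t)⁻¹ * ‖Y t‖ ^ (p + 1)) +
        (∫ s in (0 : ℝ)..t,
          ((1 / 2) * (A s)⁻¹ ^ 2 * A' s * ‖Y' s‖ ^ 2 +
            (lam / (p + 1)) * (A s)⁻¹ ^ 2 * A' s * ‖Y s‖ ^ (p + 1))) =
      (1 / 2) * (A 0)⁻¹ * ‖Y' 0‖ ^ 2 + (1 / 2) * ‖Y 0‖ ^ 2 +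
        (lam / (p + 1)) * (A 0)⁻¹ * ‖Y 0‖ ^ (p + 1) := by
  set f : ℝ → ℝ := fun t => (1 / 2) * (A t)⁻¹ * ‖Y' t‖ ^ 2 + (1 / 2) * ‖Y t‖ ^ 2 +
      (lam / (p + 1)) * (A t)⁻¹ * ‖Y t‖ ^ (p + 1) with hfdef
  set g : ℝ → ℝ := fun s => (1 / 2) * (A s)⁻¹ ^ 2 * A' s * ‖Y' s‖ ^ 2 +
      (lam / (p + 1)) * (A s)⁻¹ ^ 2 * A' s * ‖Y s‖ ^ (p + 1) with hgdef
  -- the key derivative computation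
  have key : ∀ s ∈ Ico (0:ℝ) T, HasDerivWithinAt f (-(g s)) (Ico (0:ℝ) T) s := by
    intro s hs
    have hAne : A s ≠ 0 := (hApos s hs).ne'
    set I : ℝ := inner ℝ (Y s) (Y' s) with hI
    have hB : HasDerivWithinAt (fun t => (A t)⁻¹) (-(A' s) / A s ^ 2) (Ico (0:ℝ) T) s :=
      (hA s hs).inv hAne
    have hu : HasDerivWithinAt (fun t => ‖Y t‖ ^ 2) (2 * I) (Ico (0:ℝ) T) s := by
      have h := (hY1 s hs).inner ℝ (hY1 s hs)
      simp only [real_inner_self_eq_norm_sq] at h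
      refine h.congr_deriv ?_
      rw [hI, real_inner_comm (Y' s) (Y s)]; ring
    have hv : HasDerivWithinAt (fun t => ‖Y' t‖ ^ 2)
        (2 * (-(A s) * I - lam * ‖Y s‖ ^ (p - 1) * I)) (Ico (0:ℝ) T) s := by
      have h := (hY2 s hs).inner ℝ (hY2 s hs)
      simp only [real_inner_self_eq_norm_sq, inner_sub_left, inner_sub_right, inner_neg_left,
        inner_neg_right, real_inner_smul_left, real_inner_smul_right] at h
      refine h.congr_deriv ?_
      rw [hI, real_inner_comm (Y' s) (Y s)]; ring
    have hrw : ∀ x : EuclideanSpace ℝ (Fin n), (‖x‖ ^ 2 : ℝ) ^ ((p+1)/2) = ‖x‖ ^ (p+1) := by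
      intro x
      rw [← Real.rpow_natCast ‖x‖ 2, ← Real.rpow_mul (norm_nonneg x)]
      congr 1; ring
    have hrw2 : (‖Y s‖ ^ 2 : ℝ) ^ ((p+1)/2 - 1) = ‖Y s‖ ^ (p - 1) := by
      rw [← Real.rpow_natCast ‖Y s‖ 2, ← Real.rpow_mul (norm_nonneg _)]
      congr 1; ring
    have hw : HasDerivWithinAt (fun t => ‖Y t‖ ^ (p+1))
        ((p+1) * ‖Y s‖ ^ (p-1) * I) (Ico (0:ℝ) T) s := by
      have hq : (1:ℝ) ≤ (p+1)/2 := by linarith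
      have hr : HasDerivAt (fun x : ℝ => x ^ ((p+1)/2))
          (((p+1)/2) * (‖Y s‖ ^ 2 : ℝ) ^ ((p+1)/2 - 1)) (‖Y s‖ ^ 2) :=
        Real.hasDerivAt_rpow_const (Or.inr hq)
      have h := hr.comp_hasDerivWithinAt s hu
      have hfun : (fun x : ℝ => x ^ ((p+1)/2)) ∘ (fun t => ‖Y t‖ ^ 2)
          = fun t => ‖Y t‖ ^ (p+1) := by
        funext t; simp [Function.comp, hrw]
      rw [hfun, hrw2] at h
      refine h.congr_deriv ?_; ring
    have H := (((hB.mul hv).const_mul ((1:ℝ)/2)).add (hu.const_mul ((1:ℝ)/2))).add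
      ((hB.mul hw).const_mul (lam/(p+1)))
    have hfeq : ∀ t : ℝ, 1/2 * ((A t)⁻¹ * ‖Y' t‖ ^ 2) + 1/2 * ‖Y t‖ ^ 2 +
        lam/(p+1) * ((A t)⁻¹ * ‖Y t‖ ^ (p+1)) = f t := fun t => by rw [hfdef]; ring
    simp only [Pi.add_def, Pi.mul_apply, hfeq] at H
    refine H.congr_deriv ?_
    have hp1 : p + 1 ≠ 0 := by linarith
    rw [hgdef]
    field_simp
    ring
  -- continuity facts
  have fcont : ContinuousOn f (Ico (0:ℝ) T) :=
    fun x hx => (key x hx).continuousWithinAt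
  have gcont : ContinuousOn g (Ico (0:ℝ) T) := by
    have hAcont : ContinuousOn A (Ico (0:ℝ) T) := fun x hx => (hA x hx).continuousWithinAt
    have hYcont : ContinuousOn Y (Ico (0:ℝ) T) := fun x hx => (hY1 x hx).continuousWithinAt
    have hY'cont : ContinuousOn Y' (Ico (0:ℝ) T) := fun x hx => (hY2 x hx).continuousWithinAt
    have hAinv : ContinuousOn (fun s => (A s)⁻¹) (Ico (0:ℝ) T) :=
      hAcont.inv₀ fun x hx => (hApos x hx).ne'
    have hnY : ContinuousOn (fun s => ‖Y s‖ ^ (p+1)) (Ico (0:ℝ) T) := by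
      apply ContinuousOn.rpow_const (hYcont.norm)
      intro x _; right; linarith
    have hnY' : ContinuousOn (fun s => ‖Y' s‖ ^ 2) (Ico (0:ℝ) T) := (hY'cont.norm).pow 2
    rw [hgdef]
    exact ((((continuousOn_const.mul (hAinv.pow 2)).mul hAc).mul hnY').add
      ((((continuousOn_const.mul (hAinv.pow 2)).mul hAc)).mul hnY))
  -- FTC
  intro t ht
  obtain ⟨ht0, htT⟩ := ht
  have hsub : Icc (0:ℝ) t ⊆ Ico (0:ℝ) T := fun x hx => ⟨hx.1, lt_of_le_of_lt hx.2 htT⟩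
  have hint : IntervalIntegrable (fun s => -(g s)) MeasureTheory.volume 0 t := by
    apply ContinuousOn.intervalIntegrable
    rw [uIcc_of_le ht0]
    exact (gcont.mono hsub).neg
  have hftc : ∫ s in (0:ℝ)..t, -(g s) = f t - f 0 := by
    apply integral_eq_sub_of_hasDeriv_right_of_le ht0 (fcont.mono hsub)
    · intro x hx
      have hx' : x ∈ Ico (0:ℝ) T := ⟨le_of_lt hx.1, lt_trans hx.2 htT⟩
      have hnb : Ico (0:ℝ) T ∈ nhds x :=
        mem_nhds_iff.mpr ⟨Ioo 0 T, Ioo_subset_Ico_self, isOpen_Ioo, ⟨hx.1, lt_trans hx.2 htT⟩⟩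
      exact (((key x hx').hasDerivAt hnb).hasDerivWithinAt)
    · exact hint
  have : ∫ s in (0:ℝ)..t, -(g s) = -∫ s in (0:ℝ)..t, g s := by
    simp [intervalIntegral.integral_neg]
  rw [this] at hftc
  have hgoal : f t + ∫ s in (0:ℝ)..t, g s = f 0 := by linarith
  simpa [hfdef, hgdef] using hgoal
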